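/- (Region A of the atomic-limit phase diagram) Let r = 2. Assume W > 0, 0 ≤ I < zW/4, and |μ| < zW/2 − I. Then H(C) = H_i^0(C) − μ·N_i(C) attains its minimum over all ion configurations at exactly two configurations: the configuration with n_{x,σ} = 1 for all x ∈ Λᵉ and σ ∈ {↑,↓} and n_{x,σ} = 0 on Λᵒ, and the configuration obtained by exchanging Λᵉ and Λᵒ. -/

import Mathlib

open Finset

/-- Occupation number (0 or 1) attached to a Boolean occupancy variable. -/
noncomputable def occ (b : Bool) : ℝ := if b then 1 else 0

/-- Total number of ions at site `x` (as a real number): `n_x = Σ_σ n_{x,σ}`. -/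
noncomputable def nsite {V : Type*} {r : ℕ} (C : V → Fin r → Bool) (x : V) : ℝ :=
  ∑ σ : Fin r, occ (C x σ)

/-- Total number of ions at site `x` (as a natural number). -/
def nnat {V : Type*} {r : ℕ} (C : V → Fin r → Bool) (x : V) : ℕ :=
  ∑ σ : Fin r, (if C x σ then 1 else 0)

/-- The classical Hamiltonian
`H_i^0(C) = 2I Σ_x Σ_{σ'<σ''} (n_{x,σ'} - 1/2)(n_{x,σ''} - 1/2)
          + (W/2) Σ_{⟨x,y⟩} (n_x - r/2)(n_y - r/2)`,
where the sum over edges `⟨x,y⟩` (each edge counted once) is written as half the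
symmetric double sum over ordered adjacent pairs. -/
noncomputable def H0 {V : Type*} [Fintype V] (G : SimpleGraph V) [DecidableRel G.Adj]
    (r : ℕ) (I W : ℝ) (C : V → Fin r → Bool) : ℝ :=
  2 * I * ∑ x : V, ∑ p ∈ Finset.univ.filter (fun p : Fin r × Fin r => p.1 < p.2),
      (occ (C x p.1) - 1 / 2) * (occ (C x p.2) - 1 / 2)
  + W / 2 * ((∑ x : V, ∑ y : V,
      (if G.Adj x y then (nsite C x - r / 2) * (nsite C y - r / 2) else 0)) / 2)

/-- Total ion number `N_i(C) = Σ_{x,σ} n_{x,σ}` (as a real number). -/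
noncomputable def Ni {V : Type*} {r : ℕ} [Fintype V] (C : V → Fin r → Bool) : ℝ :=
  ∑ x : V, ∑ σ : Fin r, occ (C x σ)

/-- Grand-canonical classical Hamiltonian `H(C) = H_i^0(C) − μ·N_i(C)` for two species. -/
noncomputable def Hgc {V : Type*} [Fintype V] (G : SimpleGraph V) [DecidableRel G.Adj]
    (I W μ : ℝ) (C : V → Fin 2 → Bool) : ℝ :=
  H0 G 2 I W C - μ * Ni C

/-! ### Auxiliary machinery -/

/-- Energy attached to an ordered adjacent pair of sites. -/
noncomputable def pairE (z I W μ : ℝ) (u v : Fin 2 → Bool) : ℝ :=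
  (2*I*((occ (u 0) - 1/2)*(occ (u 1) - 1/2) + (occ (v 0) - 1/2)*(occ (v 1) - 1/2))
    - μ*(occ (u 0) + occ (u 1) + occ (v 0) + occ (v 1)))/(2*z)
  + W/4*((occ (u 0) + occ (u 1)) - 1)*((occ (v 0) + occ (v 1)) - 1)

/-- The minimal pair energy. -/
noncomputable def Emin (z I W μ : ℝ) : ℝ := (I - 2*μ)/(2*z) - W/4

lemma keylt (z : ℝ) (hz : 0 < z) (A w A' B' : ℝ) (h : A - 2*z*w < A' + 2*z*B') :
    A/(2*z) - w < A'/(2*z) + B' := by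
  have h2 : (0:ℝ) < 2*z := by linarith
  have e : A/(2*z) - w - (A'/(2*z)+B') = ((A - 2*z*w) - (A' + 2*z*B'))/(2*z) := by
    field_simp
  have := div_neg_of_neg_of_pos (by linarith : (A - 2*z*w) - (A' + 2*z*B') < 0) h2
  linarith

lemma strict_to (a b : ℝ) (P : Prop) (h : a < b) : a ≤ b ∧ (b = a → P) :=
  ⟨h.le, fun he => absurd he h.ne'⟩

set_option maxHeartbeats 1000000 in
lemma pairE_ge (z : ℕ) (hz : 2 ≤ z) (I W μ : ℝ) (hW : 0 < W) (hI0 : 0 ≤ I)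
    (hIW : I < (z : ℝ) * W / 4) (hmu : |μ| < (z : ℝ) * W / 2 - I) (u v : Fin 2 → Bool) :
    Emin z I W μ ≤ pairE z I W μ u v ∧
    (pairE z I W μ u v = Emin z I W μ →
      ((∀ σ, u σ = true) ∧ (∀ σ, v σ = false)) ∨
      ((∀ σ, u σ = false) ∧ (∀ σ, v σ = true))) := by
  have hz' : (2:ℝ) ≤ (z:ℝ) := by exact_mod_cast hz
  have hzpos : (0:ℝ) < (z:ℝ) := by linarith
  obtain ⟨hmu2, hmu1⟩ := abs_lt.mp hmu
  have mk2 : ∀ (w : Fin 2 → Bool) (b : Bool), w 0 = b → w 1 = b → ∀ σ, w σ = b := by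
    intro w b h0 h1 σ
    fin_cases σ
    exacts [h0, h1]
  cases hu0 : u 0 <;> cases hu1 : u 1 <;> cases hv0 : v 0 <;> cases hv1 : v 1 <;>
    simp only [pairE, Emin, occ, hu0, hu1, hv0, hv1, if_true, if_false,
      Bool.false_eq_true, ite_true, ite_false] <;>
    first
      | exact ⟨le_of_eq (by ring), fun _ => Or.inl ⟨mk2 u true hu0 hu1, mk2 v false hv0 hv1⟩⟩
      | exact ⟨le_of_eq (by ring), fun _ => Or.inr ⟨mk2 u false hu0 hu1, mk2 v true hv0 hv1⟩⟩
      | exact strict_to _ _ _ (keylt _ hzpos _ _ _ _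
          (by linarith [hz', hW, hI0, hIW, hmu1, hmu2]))

lemma pairE_fe (z I W μ : ℝ) :
    pairE z I W μ (fun _ => true) (fun _ => false) = Emin z I W μ := by
  simp [pairE, Emin, occ]; ring

lemma pairE_ef (z I W μ : ℝ) :
    pairE z I W μ (fun _ => false) (fun _ => true) = Emin z I W μ := by
  simp [pairE, Emin, occ]; ring

section Graph

variable {V : Type*} [Fintype V] {G : SimpleGraph V} [DecidableRel G.Adj]

lemma sum_adj_left (z : ℕ) (hreg : G.IsRegularOfDegree z) (t : V → ℝ) :
    ∑ x : V, ∑ y : V, (if G.Adj x y then t x else 0) = (z:ℝ) * ∑ x : V, t x := by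
  rw [Finset.mul_sum]
  refine Finset.sum_congr rfl fun x _ => ?_
  rw [Finset.sum_ite, Finset.sum_const, Finset.sum_const_zero, add_zero]
  have hc : (univ.filter (fun y => G.Adj x y)).card = z := by
    rw [← hreg x, SimpleGraph.degree]; congr 1
    ext y; simp [SimpleGraph.mem_neighborFinset]
  rw [hc, nsmul_eq_mul]

lemma sum_adj_right (z : ℕ) (hreg : G.IsRegularOfDegree z) (t : V → ℝ) :
    ∑ x : V, ∑ y : V, (if G.Adj x y then t y else 0) = (z:ℝ) * ∑ x : V, t x := by
  rw [Finset.sum_comm]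
  rw [← sum_adj_left z hreg t]
  refine Finset.sum_congr rfl fun y _ => Finset.sum_congr rfl fun x _ => ?_
  simp [SimpleGraph.adj_comm]

lemma Hgc_eq (z : ℕ) (hz : 0 < z) (hreg : G.IsRegularOfDegree z) (I W μ : ℝ)
    (C : V → Fin 2 → Bool) :
    Hgc G I W μ C = ∑ x : V, ∑ y : V,
      (if G.Adj x y then pairE z I W μ (C x) (C y) else 0) := by
  have hzR : ((z:ℝ)) ≠ 0 := by positivity
  have hfilter : Finset.univ.filter (fun p : Fin 2 × Fin 2 => p.1 < p.2)
      = {((0:Fin 2),(1:Fin 2))} := by decide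
  set P : V → ℝ := fun x => (occ (C x 0) - 1/2) * (occ (C x 1) - 1/2) with hP
  set M : V → ℝ := fun x => occ (C x 0) + occ (C x 1) with hM
  have hns : ∀ x, nsite C x = M x := fun x => by simp [nsite, Fin.sum_univ_two, hM]
  have hsplit : ∀ x y : V, (if G.Adj x y then pairE z I W μ (C x) (C y) else 0)
      = (if G.Adj x y then (2*I*(P x) - μ*(M x))/(2*z) else 0)
      + (if G.Adj x y then (2*I*(P y) - μ*(M y))/(2*z) else 0)
      + (if G.Adj x y then W/4*(M x - 1)*(M y - 1) else 0) := by
    intro x y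
    by_cases h : G.Adj x y <;> simp only [h, if_true, if_false, pairE, hP, hM]
    · field_simp; ring
    · ring
  calc Hgc G I W μ C
      = 2*I*∑ x : V, P x - μ * ∑ x : V, M x
        + W/4 * ∑ x : V, ∑ y : V, (if G.Adj x y then (M x - 1)*(M y - 1) else 0) := by
        simp only [Hgc, H0, Ni, hfilter, Finset.sum_singleton]
        have h1 : ∀ x y : V, (if G.Adj x y then (nsite C x - (2:ℕ)/2)*(nsite C y - (2:ℕ)/2) else 0)
            = (if G.Adj x y then (M x - 1)*(M y - 1) else 0) := by
          intro x y; by_cases h : G.Adj x y <;> simp [h, hns]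
        simp only [h1]
        have h2 : (∑ x : V, ∑ σ : Fin 2, occ (C x σ)) = ∑ x : V, M x := by
          refine Finset.sum_congr rfl fun x _ => ?_
          simp [Fin.sum_univ_two, hM]
        rw [h2]
        ring
    _ = _ := by
        simp only [hsplit, Finset.sum_add_distrib]
        rw [sum_adj_left z hreg (fun x => (2*I*(P x) - μ*(M x))/(2*(z:ℝ))),
            sum_adj_right z hreg (fun x => (2*I*(P x) - μ*(M x))/(2*(z:ℝ)))]
        have h3 : ∀ x y : V, (if G.Adj x y then W/4*(M x - 1)*(M y - 1) else 0)
            = W/4 * (if G.Adj x y then (M x - 1)*(M y - 1) else 0) := by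
          intro x y; split <;> ring
        simp only [h3, ← Finset.mul_sum]
        have h4 : ∑ x : V, (2*I*(P x) - μ*(M x))/(2*(z:ℝ))
            = (2*I*(∑ x : V, P x) - μ*(∑ x : V, M x))/(2*(z:ℝ)) := by
          rw [← Finset.sum_div, Finset.sum_sub_distrib, ← Finset.mul_sum, ← Finset.mul_sum]
        rw [h4]
        field_simp
        ring

lemma const_of_adj (hconn : G.Connected) (f : V → Prop)
    (hf : ∀ x y, G.Adj x y → (f x ↔ f y)) : ∀ x y, f x ↔ f y := by
  intro x y
  obtain ⟨w⟩ := hconn x y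
  induction w with
  | nil => exact Iff.rfl
  | cons h p ih => exact (hf _ _ h).trans ih

end Graph

/-- **Region A.** For `W > 0`, `0 ≤ I < zW/4` and `|μ| < zW/2 − I`, the
minimizers of `H(C) = H_i^0(C) − μ·N_i(C)` are exactly the two full checkerboard
configurations. -/
theorem statement15
    {V : Type*} [Fintype V] [DecidableEq V]
    (G : SimpleGraph V) [DecidableRel G.Adj]
    (z : ℕ) (hz : 2 ≤ z)
    (hreg : G.IsRegularOfDegree z) (hconn : G.Connected)
    (Λe Λo : Finset V)
    (hcover : ∀ v : V, v ∈ Λe ∨ v ∈ Λo) (hdisj : Disjoint Λe Λo)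
    (hbip : ∀ x y : V, G.Adj x y → (x ∈ Λe ∧ y ∈ Λo) ∨ (x ∈ Λo ∧ y ∈ Λe))
    (I W μ : ℝ) (hW : 0 < W) (hI0 : 0 ≤ I) (hIW : I < (z : ℝ) * W / 4)
    (hmu : |μ| < (z : ℝ) * W / 2 - I) :
    {C : V → Fin 2 → Bool | ∀ C' : V → Fin 2 → Bool, Hgc G I W μ C ≤ Hgc G I W μ C'} =
      {fun x _ => decide (x ∈ Λe), fun x _ => decide (x ∈ Λo)} ∧
    (fun (x : V) (_ : Fin 2) => decide (x ∈ Λe)) ≠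
      (fun (x : V) (_ : Fin 2) => decide (x ∈ Λo)) := by
  classical
  have hzpos : 0 < z := by omega
  set Ce : V → Fin 2 → Bool := fun x _ => decide (x ∈ Λe) with hCe_def
  set Co : V → Fin 2 → Bool := fun x _ => decide (x ∈ Λo) with hCo_def
  have hdLR : ∀ w : V, w ∈ Λe → w ∉ Λo := fun w hw => Finset.disjoint_left.mp hdisj hw
  have hdRL : ∀ w : V, w ∈ Λo → w ∉ Λe := fun w hw => Finset.disjoint_right.mp hdisj hw
  have hpair := fun (u v : Fin 2 → Bool) => pairE_ge z hz I W μ hW hI0 hIW hmu u v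
  have hCeT : ∀ x, x ∈ Λe → Ce x = (fun _ => true) :=
    fun x hx => funext fun _ => decide_eq_true hx
  have hCeF : ∀ x, x ∉ Λe → Ce x = (fun _ => false) :=
    fun x hx => funext fun _ => decide_eq_false hx
  have hCoT : ∀ x, x ∈ Λo → Co x = (fun _ => true) :=
    fun x hx => funext fun _ => decide_eq_true hx
  have hCoF : ∀ x, x ∉ Λo → Co x = (fun _ => false) :=
    fun x hx => funext fun _ => decide_eq_false hx
  have hEce : ∀ x y, G.Adj x y → pairE z I W μ (Ce x) (Ce y) = Emin z I W μ := by
    intro x y hxy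
    rcases hbip x y hxy with ⟨h1, h2⟩ | ⟨h1, h2⟩
    · rw [hCeT x h1, hCeF y (hdRL y h2)]; exact pairE_fe _ _ _ _
    · rw [hCeF x (hdRL x h1), hCeT y h2]; exact pairE_ef _ _ _ _
  have hEco : ∀ x y, G.Adj x y → pairE z I W μ (Co x) (Co y) = Emin z I W μ := by
    intro x y hxy
    rcases hbip x y hxy with ⟨h1, h2⟩ | ⟨h1, h2⟩
    · rw [hCoF x (hdLR x h1), hCoT y h2]; exact pairE_ef _ _ _ _
    · rw [hCoT x h1, hCoF y (hdLR y h2)]; exact pairE_fe _ _ _ _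
  have hHce : Hgc G I W μ Ce = ∑ x : V, ∑ y : V,
      (if G.Adj x y then Emin z I W μ else 0) := by
    rw [Hgc_eq z hzpos hreg]
    refine Finset.sum_congr rfl fun x _ => Finset.sum_congr rfl fun y _ => ?_
    by_cases h : G.Adj x y
    · simp only [h, if_true]; exact hEce x y h
    · simp [h]
  have hHco : Hgc G I W μ Co = ∑ x : V, ∑ y : V,
      (if G.Adj x y then Emin z I W μ else 0) := by
    rw [Hgc_eq z hzpos hreg]
    refine Finset.sum_congr rfl fun x _ => Finset.sum_congr rfl fun y _ => ?_
    by_cases h : G.Adj x y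
    · simp only [h, if_true]; exact hEco x y h
    · simp [h]
  have hlb : ∀ C' : V → Fin 2 → Bool,
      (∑ x : V, ∑ y : V, (if G.Adj x y then Emin z I W μ else 0)) ≤ Hgc G I W μ C' := by
    intro C'
    rw [Hgc_eq z hzpos hreg]
    refine Finset.sum_le_sum fun x _ => Finset.sum_le_sum fun y _ => ?_
    by_cases h : G.Adj x y
    · simp only [h, if_true]; exact (hpair (C' x) (C' y)).1
    · simp [h]
  have hmin_e : ∀ C', Hgc G I W μ Ce ≤ Hgc G I W μ C' := fun C' => hHce ▸ hlb C'
  have hmin_o : ∀ C', Hgc G I W μ Co ≤ Hgc G I W μ C' := fun C' => hHco ▸ hlb C'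
  have hnb : ∀ x : V, ∃ y, G.Adj x y := by
    intro x
    have hd : 0 < G.degree x := by rw [hreg x]; omega
    rw [← SimpleGraph.card_neighborFinset_eq_degree, Finset.card_pos] at hd
    obtain ⟨y, hy⟩ := hd
    exact ⟨y, (SimpleGraph.mem_neighborFinset _ _ _).mp hy⟩
  constructor
  · ext C
    simp only [Set.mem_setOf_eq, Set.mem_insert_iff, Set.mem_singleton_iff]
    constructor
    · intro hC
      have inner_le : ∀ x : V, ∀ y ∈ (univ : Finset V),
          (if G.Adj x y then Emin z I W μ else 0)
            ≤ (if G.Adj x y then pairE z I W μ (C x) (C y) else 0) := by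
        intro x y _
        by_cases h : G.Adj x y
        · simpa [h] using (hpair (C x) (C y)).1
        · simp [h]
      have heq : (∑ x : V, ∑ y : V, (if G.Adj x y then Emin z I W μ else 0))
          = ∑ x : V, ∑ y : V, (if G.Adj x y then pairE z I W μ (C x) (C y) else 0) := by
        have h1 : Hgc G I W μ C ≤ Hgc G I W μ Ce := hC Ce
        have h2 := hlb C
        rw [hHce] at h1
        rw [Hgc_eq z hzpos hreg] at h1 h2
        linarith
      have hterm : ∀ x y, G.Adj x y → pairE z I W μ (C x) (C y) = Emin z I W μ := by
        intro x y hxy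
        have houter := (Finset.sum_eq_sum_iff_of_le
          (fun x (_ : x ∈ (univ : Finset V)) => Finset.sum_le_sum (inner_le x))).mp heq
          x (mem_univ x)
        have hin := (Finset.sum_eq_sum_iff_of_le (inner_le x)).mp houter y (mem_univ y)
        rw [if_pos hxy, if_pos hxy] at hin
        exact hin.symm
      have hpat : ∀ x y, G.Adj x y →
          ((∀ σ, C x σ = true) ∧ (∀ σ, C y σ = false)) ∨
          ((∀ σ, C x σ = false) ∧ (∀ σ, C y σ = true)) :=
        fun x y hxy => (hpair (C x) (C y)).2 (hterm x y hxy)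
      have hall : ∀ x : V, (∀ σ, C x σ = true) ∨ (∀ σ, C x σ = false) := by
        intro x; obtain ⟨y, hxy⟩ := hnb x
        rcases hpat x y hxy with ⟨h1, _⟩ | ⟨h1, _⟩
        exacts [Or.inl h1, Or.inr h1]
      have hnt : ∀ w : V, (∀ σ, C w σ = false) → ¬(∀ σ, C w σ = true) := by
        intro w hw hw'
        have h0 := hw 0
        rw [hw' 0] at h0
        exact absurd h0 (by simp)
      have hstep : ∀ x y, G.Adj x y →
          (((∀ σ, C x σ = true) ↔ x ∈ Λe) ↔ ((∀ σ, C y σ = true) ↔ y ∈ Λe)) := by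
        intro x y hxy
        rcases hpat x y hxy with ⟨h1, h2⟩ | ⟨h1, h2⟩ <;>
          rcases hbip x y hxy with ⟨m1, m2⟩ | ⟨m1, m2⟩
        · have n1 := hnt y h2; have n2 := hdRL y m2; tauto
        · have n1 := hnt y h2; have n2 := hdRL x m1; tauto
        · have n1 := hnt x h1; have n2 := hdRL y m2; tauto
        · have n1 := hnt x h1; have n2 := hdRL x m1; tauto
      have hglob : ∀ x y : V,
          (((∀ σ, C x σ = true) ↔ x ∈ Λe) ↔ ((∀ σ, C y σ = true) ↔ y ∈ Λe)) :=
        const_of_adj hconn _ hstep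
      obtain ⟨v0⟩ := hconn.nonempty
      by_cases hv : (∀ σ, C v0 σ = true) ↔ v0 ∈ Λe
      · left
        funext x σ
        have hx := (hglob x v0).mpr hv
        rcases hall x with ht | hf
        · have hxe : x ∈ Λe := hx.mp ht
          simp only [hCe_def]
          rw [ht σ, decide_eq_true hxe]
        · have hxe : x ∉ Λe := fun h => (hnt x hf) (hx.mpr h)
          simp only [hCe_def]
          rw [hf σ, decide_eq_false hxe]
      · right
        funext x σ
        have hx : ¬(((∀ σ, C x σ = true)) ↔ x ∈ Λe) := fun h => hv ((hglob x v0).mp h)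
        rcases hall x with ht | hf
        · have hxe : x ∉ Λe := fun h => hx ⟨fun _ => h, fun _ => ht⟩
          have hxo : x ∈ Λo := (hcover x).resolve_left hxe
          simp only [hCo_def]
          rw [ht σ, decide_eq_true hxo]
        · have hnq : ¬(∀ σ, C x σ = true) := hnt x hf
          have hxe : x ∈ Λe := by
            by_contra h
            exact hx ⟨fun q => absurd q hnq, fun q => absurd q h⟩
          have hxo : x ∉ Λo := hdLR x hxe
          simp only [hCo_def]
          rw [hf σ, decide_eq_false hxo]
    · rintro (rfl | rfl)
      exacts [hmin_e, hmin_o]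
  · intro h
    obtain ⟨v0⟩ := hconn.nonempty
    rcases hcover v0 with hv | hv
    · have h1 := congrFun (congrFun h v0) 0
      simp only [hCe_def, hCo_def] at h1
      rw [decide_eq_true hv, decide_eq_false (hdLR v0 hv)] at h1
      exact absurd h1 (by simp)
    · have h1 := congrFun (congrFun h v0) 0
      simp only [hCe_def, hCo_def] at h1
      rw [decide_eq_false (hdRL v0 hv), decide_eq_true hv] at h1
      exact absurd h1 (by simp)
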